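/- Consider a two-sender instance over a finite field F with parts P_1, P_2, P_{12}, side-information sets K_i, and eavesdropper set A with A_T = A ∩ P_T. Assume the interactions between P_1 and P_{12} are fully participated in both directions: P_{12} ⊆ K_i for every i ∈ P_1, and P_1 ⊆ K_j for every j ∈ P_{12}. Suppose for each T ∈ {1, 2, {1,2}} there exists a matrix G_T ∈ F^{l_T×|P_T|} that is a valid index code for the sub-instance induced on P_T and weakly secure against A_T. Then the code in which sender 1 transmits the symbolwise sum of G_1x^{(1)} and G_{12}x^{(12)} (the shorter codeword zero-padded to length max{l_1, l_{12}}) and sender 2 transmits G_2x^{(2)} is a valid weakly secure two-sender linear index code for the full instance of total length max{l_{12}, l_1} + l_2. In particular l* ≤ max{l*_{12}, l*_1} + l*_2. -/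
import Mathlib


open Matrix Sum

attribute [local instance] Classical.propDecidable

noncomputable section

variable (F : Type*) [Field F] [Fintype F]

/-- The row space of a matrix: the span of its rows. -/
def rowSpace {ρ ι : Type*} (G : Matrix ρ ι F) : Submodule F (ι → F) :=
  Submodule.span F (Set.range fun r j => G r j)

/-- Weak security of the linear code `x ↦ G x` against an eavesdropper knowing `x j` for
`j ∈ A`: for every `i ∉ A` and every `u` supported in `A`, `u + e i` is not in the
row space of `G`. -/
def WeaklySecure {ρ ι : Type*} (G : Matrix ρ ι F) (A : Set ι) : Prop :=
  ∀ i ∉ A, ∀ u : ι → F, (∀ j, u j ≠ 0 → j ∈ A) →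
    u + Pi.single i (1 : F) ∉ rowSpace F G

/-- `G` is a valid index code for side-information sets `K`: every receiver `i` can
decode `x i` from the codeword `G.mulVec x` and its side information `x|_{K i}`. -/
def ValidCode {ρ ι : Type*} [Fintype ι] (K : ι → Set ι) (G : Matrix ρ ι F) : Prop :=
  ∀ i : ι, ∃ D : (ρ → F) → (↥(K i) → F) → F,
    ∀ x : ι → F, D (G.mulVec x) (fun j => x j.1) = x i

/-- `G` has two-sender form for the parts `P1`, `P2`: its rows split into sender-1 rows,
zero on all columns in `P2`, and sender-2 rows, zero on all columns in `P1`. -/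
def TwoSenderForm {ρ ι : Type*} (P1 P2 : Set ι) (G : Matrix ρ ι F) : Prop :=
  ∃ S : Set ρ, (∀ r ∈ S, ∀ j ∈ P2, G r j = 0) ∧ (∀ r ∉ S, ∀ j ∈ P1, G r j = 0)

/-- Achievable lengths of valid weakly secure (single-sender) linear index codes. -/
def oneLens {ι : Type*} [Fintype ι] (K : ι → Set ι) (A : Set ι) : Set ℕ :=
  {l | ∃ G : Matrix (Fin l) ι F, ValidCode F K G ∧ WeaklySecure F G A}

/-- Achievable total lengths of valid weakly secure two-sender linear index codes. -/
def twoLens {ι : Type*} [Fintype ι] (P1 P2 : Set ι) (K : ι → Set ι) (A : Set ι) :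
    Set ℕ :=
  {l | ∃ G : Matrix (Fin l) ι F,
      TwoSenderForm F P1 P2 G ∧ ValidCode F K G ∧ WeaklySecure F G A}

/-- Side-information sets of the sub-instance induced on `S`. -/
def subK {ι : Type*} (K : ι → Set ι) (S : Set ι) : ↥S → Set ↥S :=
  fun i => {j : ↥S | (j : ι) ∈ K (i : ι)}

/-- Extend a matrix with columns indexed by `↥S` to one with columns indexed by `ι`,
filling the new columns with zeros. -/
def extendCols {ρ ι : Type*} (S : Set ι) (G : Matrix ρ ↥S F) : Matrix ρ ι F :=
  Matrix.of fun r => Function.extend (Subtype.val) (G r) (fun _ => 0)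

/-- Zero-pad a matrix with `l` rows to one with `L` rows. -/
def padMat {ι : Type*} (L : ℕ) {l : ℕ} (G : Matrix (Fin l) ι F) : Matrix (Fin L) ι F :=
  Matrix.of fun r j => if h : (r : ℕ) < l then G ⟨(r : ℕ), h⟩ j else 0

-- helpers
lemma extendCols_apply_mem {ρ ι : Type*} {S : Set ι} (G : Matrix ρ ↥S F) (r : ρ)
    {j : ι} (h : j ∈ S) : extendCols F S G r j = G r ⟨j, h⟩ := by
  simpa [extendCols] using Subtype.val_injective.extend_apply (G r) (fun _ => 0) ⟨j, h⟩

lemma extendCols_apply_notMem {ρ ι : Type*} {S : Set ι} (G : Matrix ρ ↥S F) (r : ρ)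
    {j : ι} (h : j ∉ S) : extendCols F S G r j = 0 := by
  have : ¬∃ a : ↥S, (a : ι) = j := by rintro ⟨a, rfl⟩; exact h a.2
  simpa [extendCols] using Function.extend_apply' (G r) (fun _ => 0) j this

lemma mulVec_extendCols {ρ ι : Type*} [Fintype ι] (S : Set ι) (G : Matrix ρ ↥S F)
    (x : ι → F) (r : ρ) :
    (extendCols F S G).mulVec x r = G.mulVec (fun j => x j) r := by
  unfold Matrix.mulVec dotProduct
  have h1 : ∑ j : ι, extendCols F S G r j * x j
      = ∑ j ∈ S.toFinset, extendCols F S G r j * x j := by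
    refine (Finset.sum_subset (Finset.subset_univ _) ?_).symm
    intro j _ hj
    rw [extendCols_apply_notMem F G r (by simpa using hj), zero_mul]
  simp only []
  rw [h1, ← Finset.sum_set_coe]
  refine Finset.sum_congr rfl fun j _ => ?_
  rw [extendCols_apply_mem F G r j.2, Subtype.eta]

lemma restrict_mem_rowSpace {ρ ρ' ι : Type*} (G : Matrix ρ ι F) (S : Set ι)
    (G' : Matrix ρ' ↥S F)
    (h : ∀ r : ρ, (fun j : ↥S => G r j) ∈ rowSpace F G')
    {v : ι → F} (hv : v ∈ rowSpace F G) :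
    (fun j : ↥S => v j) ∈ rowSpace F G' := by
  have hle : Submodule.span F (Set.range fun r j => G r j) ≤
      (rowSpace F G').comap (LinearMap.funLeft F F (Subtype.val : ↥S → ι)) := by
    rw [Submodule.span_le]
    rintro _ ⟨r, rfl⟩
    exact h r
  exact hle hv

lemma restrict_single {ι : Type*} (S : Set ι) {i : ι} (h : i ∈ S) :
    (fun j : ↥S => (Pi.single i (1 : F) : ι → F) j) = (Pi.single (⟨i, h⟩ : ↥S) (1 : F) : ↥S → F) := by
  funext j
  rcases eq_or_ne j ⟨i, h⟩ with rfl | hne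
  · simp
  · rw [Pi.single_eq_of_ne hne, Pi.single_eq_of_ne (fun hc => hne (Subtype.ext hc))]

def combMat {m l1 l2 l12 : ℕ} (P1 P2 P12 : Set (Fin m))
    (G1 : Matrix (Fin l1) ↥P1 F) (G2 : Matrix (Fin l2) ↥P2 F)
    (G12 : Matrix (Fin l12) ↥P12 F) :
    Matrix (Fin (max l1 l12) ⊕ Fin l2) (Fin m) F :=
  Matrix.of (Sum.elim
    (fun r => (padMat F (max l1 l12) (extendCols F P1 G1) +
      padMat F (max l1 l12) (extendCols F P12 G12)) r)
    (fun r => extendCols F P2 G2 r))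

lemma combMat_spec {m l1 l2 l12 : ℕ}
    (P1 P2 P12 : Set (Fin m))
    (h12 : Disjoint P1 P2) (h112 : Disjoint P1 P12) (h212 : Disjoint P2 P12)
    (hcov : P1 ∪ P2 ∪ P12 = Set.univ)
    (K : Fin m → Set (Fin m))
    (hfull1 : ∀ i ∈ P1, P12 ⊆ K i)
    (hfull2 : ∀ j ∈ P12, P1 ⊆ K j)
    (A : Set (Fin m))
    (G1 : Matrix (Fin l1) ↥P1 F) (G2 : Matrix (Fin l2) ↥P2 F)
    (G12 : Matrix (Fin l12) ↥P12 F)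
    (hG1v : ValidCode F (subK K P1) G1)
    (hG1s : WeaklySecure F G1 (Subtype.val ⁻¹' A))
    (hG2v : ValidCode F (subK K P2) G2)
    (hG2s : WeaklySecure F G2 (Subtype.val ⁻¹' A))
    (hG12v : ValidCode F (subK K P12) G12)
    (hG12s : WeaklySecure F G12 (Subtype.val ⁻¹' A)) :
    (∀ r : Fin (max l1 l12), ∀ j ∈ P2, combMat F P1 P2 P12 G1 G2 G12 (inl r) j = 0) ∧
    (∀ r : Fin l2, ∀ j ∈ P1, combMat F P1 P2 P12 G1 G2 G12 (inr r) j = 0) ∧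
    ValidCode F K (combMat F P1 P2 P12 G1 G2 G12) ∧
    WeaklySecure F (combMat F P1 P2 P12 G1 G2 G12) A := by
  set G := combMat F P1 P2 P12 G1 G2 G12 with hGdef
  -- row entry computations
  have hinl : ∀ (r : Fin (max l1 l12)) (j : Fin m),
      G (inl r) j = (if h : (r : ℕ) < l1 then extendCols F P1 G1 ⟨r, h⟩ j else 0) +
        (if h : (r : ℕ) < l12 then extendCols F P12 G12 ⟨r, h⟩ j else 0) := by
    intro r j; rfl
  have hinr : ∀ (r : Fin l2) (j : Fin m), G (inr r) j = extendCols F P2 G2 r j := by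
    intro r j; rfl
  have hz2 : ∀ r : Fin (max l1 l12), ∀ j ∈ P2, G (inl r) j = 0 := by
    intro r j hj
    have n1 : j ∉ P1 := Set.disjoint_right.1 h12 hj
    have n12 : j ∉ P12 := Set.disjoint_left.1 h212 hj
    have e1 : ∀ q : Fin l1, extendCols F P1 G1 q j = 0 :=
      fun q => extendCols_apply_notMem F G1 q n1
    have e12 : ∀ q : Fin l12, extendCols F P12 G12 q j = 0 :=
      fun q => extendCols_apply_notMem F G12 q n12
    rw [hinl]
    by_cases h1 : (r : ℕ) < l1 <;> by_cases h2 : (r : ℕ) < l12 <;>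
      simp [h1, h2, e1, e12]
  have hz1 : ∀ r : Fin l2, ∀ j ∈ P1, G (inr r) j = 0 := by
    intro r j hj
    rw [hinr]
    exact extendCols_apply_notMem F G2 _ (Set.disjoint_left.1 h12 hj)
  -- mulVec computations
  have hmv1 : ∀ (x : Fin m → F) (r : Fin (max l1 l12)),
      G.mulVec x (inl r) =
        (if h : (r : ℕ) < l1 then G1.mulVec (fun j : ↥P1 => x j) ⟨r, h⟩ else 0) +
        (if h : (r : ℕ) < l12 then G12.mulVec (fun j : ↥P12 => x j) ⟨r, h⟩ else 0) := by
    intro x r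
    have : G.mulVec x (inl r) =
        ∑ j : Fin m, ((if h : (r : ℕ) < l1 then extendCols F P1 G1 ⟨r, h⟩ j else 0) +
          (if h : (r : ℕ) < l12 then extendCols F P12 G12 ⟨r, h⟩ j else 0)) * x j := by
      unfold Matrix.mulVec dotProduct
      exact Finset.sum_congr rfl fun j _ => congrArg (fun t => t * x j) (hinl r j)
    rw [this]
    rw [Finset.sum_congr rfl (fun j _ => add_mul _ _ (x j)), Finset.sum_add_distrib]
    congr 1
    · by_cases h : (r : ℕ) < l1
      · simp only [dif_pos h]
        exact mulVec_extendCols F P1 G1 x ⟨(r : ℕ), h⟩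
      · simp only [dif_neg h, zero_mul, Finset.sum_const_zero]
    · by_cases h : (r : ℕ) < l12
      · simp only [dif_pos h]
        exact mulVec_extendCols F P12 G12 x ⟨(r : ℕ), h⟩
      · simp only [dif_neg h, zero_mul, Finset.sum_const_zero]
  have hmv2 : ∀ (x : Fin m → F) (r : Fin l2),
      G.mulVec x (inr r) = G2.mulVec (fun j : ↥P2 => x j) r := by
    intro x r
    exact mulVec_extendCols F P2 G2 x r
  refine ⟨hz2, hz1, ?_, ?_⟩
  · -- validity
    intro i
    have hi : i ∈ P1 ∪ P2 ∪ P12 := by rw [hcov]; trivial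
    simp only [Set.mem_union] at hi
    rcases hi with (hi | hi) | hi
    · -- i ∈ P1
      obtain ⟨D1, hD1⟩ := hG1v ⟨i, hi⟩
      refine ⟨fun c s => D1
        (fun r : Fin l1 => c (inl ⟨(r : ℕ), lt_of_lt_of_le r.2 (le_max_left l1 l12)⟩) -
          (if h : (r : ℕ) < l12 then
            G12.mulVec (fun j : ↥P12 => s ⟨j.1, hfull1 i hi j.2⟩) ⟨(r : ℕ), h⟩ else 0))
        (fun j => s ⟨j.1.1, j.2⟩), ?_⟩
      intro x
      have harg : (fun r : Fin l1 =>
          G.mulVec x (inl ⟨(r : ℕ), lt_of_lt_of_le r.2 (le_max_left l1 l12)⟩) -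
          (if h : (r : ℕ) < l12 then
            G12.mulVec (fun j : ↥P12 =>
              x (⟨j.1, hfull1 i hi j.2⟩ : ↥(K i)).1) ⟨(r : ℕ), h⟩ else 0))
          = G1.mulVec (fun j : ↥P1 => x j) := by
        funext r
        rw [hmv1]
        simp [r.2]
      beta_reduce
      rw [harg]
      exact hD1 (fun j : ↥P1 => x j)
    · -- i ∈ P2
      obtain ⟨D2, hD2⟩ := hG2v ⟨i, hi⟩
      refine ⟨fun c s => D2 (fun r => c (inr r)) (fun j => s ⟨j.1.1, j.2⟩), ?_⟩
      intro x
      have harg : (fun r : Fin l2 => G.mulVec x (inr r))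
          = G2.mulVec (fun j : ↥P2 => x j) := funext fun r => hmv2 x r
      beta_reduce
      rw [harg]
      exact hD2 (fun j : ↥P2 => x j)
    · -- i ∈ P12
      obtain ⟨D12, hD12⟩ := hG12v ⟨i, hi⟩
      refine ⟨fun c s => D12
        (fun r : Fin l12 => c (inl ⟨(r : ℕ), lt_of_lt_of_le r.2 (le_max_right l1 l12)⟩) -
          (if h : (r : ℕ) < l1 then
            G1.mulVec (fun j : ↥P1 => s ⟨j.1, hfull2 i hi j.2⟩) ⟨(r : ℕ), h⟩ else 0))
        (fun j => s ⟨j.1.1, j.2⟩), ?_⟩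
      intro x
      have harg : (fun r : Fin l12 =>
          G.mulVec x (inl ⟨(r : ℕ), lt_of_lt_of_le r.2 (le_max_right l1 l12)⟩) -
          (if h : (r : ℕ) < l1 then
            G1.mulVec (fun j : ↥P1 =>
              x (⟨j.1, hfull2 i hi j.2⟩ : ↥(K i)).1) ⟨(r : ℕ), h⟩ else 0))
          = G12.mulVec (fun j : ↥P12 => x j) := by
        funext r
        rw [hmv1]
        simp [r.2]
      beta_reduce
      rw [harg]
      exact hD12 (fun j : ↥P12 => x j)
  · -- security
    intro i hiA u hu hmem
    have hi : i ∈ P1 ∪ P2 ∪ P12 := by rw [hcov]; trivial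
    simp only [Set.mem_union] at hi
    rcases hi with (hi | hi) | hi
    · -- i ∈ P1
      have hrow : ∀ q : Fin (max l1 l12) ⊕ Fin l2,
          (fun j : ↥P1 => G q j) ∈ rowSpace F G1 := by
        rintro (r | r)
        · by_cases h : (r : ℕ) < l1
          · have : (fun j : ↥P1 => G (inl r) j) = fun j : ↥P1 => G1 ⟨(r : ℕ), h⟩ j := by
              funext j
              have e12 : ∀ q : Fin l12, extendCols F P12 G12 q (j : Fin m) = 0 :=
                fun q => extendCols_apply_notMem F G12 q (Set.disjoint_left.1 h112 j.2)
              rw [hinl, dif_pos h, extendCols_apply_mem F G1 _ j.2, Subtype.eta]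
              by_cases h2 : (r : ℕ) < l12 <;> simp [h2, e12]
            rw [this]; exact Submodule.subset_span ⟨⟨(r : ℕ), h⟩, rfl⟩
          · have : (fun j : ↥P1 => G (inl r) j) = 0 := by
              funext j
              have e12 : ∀ q : Fin l12, extendCols F P12 G12 q (j : Fin m) = 0 :=
                fun q => extendCols_apply_notMem F G12 q (Set.disjoint_left.1 h112 j.2)
              rw [hinl, dif_neg h]
              by_cases h2 : (r : ℕ) < l12 <;> simp [h2, e12]
            rw [this]; exact (rowSpace F G1).zero_mem
        · have : (fun j : ↥P1 => G (inr r) j) = 0 := by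
            funext j
            rw [hinr, extendCols_apply_notMem F G2 _ (Set.disjoint_left.1 h12 j.2)]; rfl
          rw [this]; exact (rowSpace F G1).zero_mem
      have hres := restrict_mem_rowSpace F G P1 G1 hrow hmem
      refine hG1s ⟨i, hi⟩ hiA (fun j : ↥P1 => u j) (fun j hj => hu j.1 hj) ?_
      convert hres using 2
      rename_i j
      by_cases h : (j : Fin m) = i
      · have hj' : j = (⟨i, hi⟩ : ↥P1) := Subtype.ext h
        simp [hj', h, Pi.single_apply]
      · have hj' : j ≠ (⟨i, hi⟩ : ↥P1) := fun hc => h (congrArg Subtype.val hc)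
        simp [hj', h, Pi.single_apply]
    · -- i ∈ P2
      have hrow : ∀ q : Fin (max l1 l12) ⊕ Fin l2,
          (fun j : ↥P2 => G q j) ∈ rowSpace F G2 := by
        rintro (r | r)
        · have : (fun j : ↥P2 => G (inl r) j) = 0 := by
            funext j; rw [hz2 r j j.2]; rfl
          rw [this]; exact (rowSpace F G2).zero_mem
        · have : (fun j : ↥P2 => G (inr r) j) = fun j : ↥P2 => G2 r j := by
            funext j
            rw [hinr, extendCols_apply_mem F G2 _ j.2, Subtype.eta]
          rw [this]; exact Submodule.subset_span ⟨r, rfl⟩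
      have hres := restrict_mem_rowSpace F G P2 G2 hrow hmem
      refine hG2s ⟨i, hi⟩ hiA (fun j : ↥P2 => u j) (fun j hj => hu j.1 hj) ?_
      convert hres using 2
      rename_i j
      by_cases h : (j : Fin m) = i
      · have hj' : j = (⟨i, hi⟩ : ↥P2) := Subtype.ext h
        simp [hj', h, Pi.single_apply]
      · have hj' : j ≠ (⟨i, hi⟩ : ↥P2) := fun hc => h (congrArg Subtype.val hc)
        simp [hj', h, Pi.single_apply]
    · -- i ∈ P12
      have hrow : ∀ q : Fin (max l1 l12) ⊕ Fin l2,
          (fun j : ↥P12 => G q j) ∈ rowSpace F G12 := by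
        rintro (r | r)
        · by_cases h : (r : ℕ) < l12
          · have : (fun j : ↥P12 => G (inl r) j) = fun j : ↥P12 => G12 ⟨(r : ℕ), h⟩ j := by
              funext j
              have e1 : ∀ q : Fin l1, extendCols F P1 G1 q (j : Fin m) = 0 :=
                fun q => extendCols_apply_notMem F G1 q (Set.disjoint_right.1 h112 j.2)
              rw [hinl, dif_pos h, extendCols_apply_mem F G12 _ j.2, Subtype.eta]
              by_cases h1 : (r : ℕ) < l1 <;> simp [h1, e1]
            rw [this]; exact Submodule.subset_span ⟨⟨(r : ℕ), h⟩, rfl⟩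
          · have : (fun j : ↥P12 => G (inl r) j) = 0 := by
              funext j
              have e1 : ∀ q : Fin l1, extendCols F P1 G1 q (j : Fin m) = 0 :=
                fun q => extendCols_apply_notMem F G1 q (Set.disjoint_right.1 h112 j.2)
              rw [hinl, dif_neg h]
              by_cases h1 : (r : ℕ) < l1 <;> simp [h1, e1]
            rw [this]; exact (rowSpace F G12).zero_mem
        · have : (fun j : ↥P12 => G (inr r) j) = 0 := by
            funext j
            rw [hinr, extendCols_apply_notMem F G2 _ (Set.disjoint_right.1 h212 j.2)]; rfl
          rw [this]; exact (rowSpace F G12).zero_mem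
      have hres := restrict_mem_rowSpace F G P12 G12 hrow hmem
      refine hG12s ⟨i, hi⟩ hiA (fun j : ↥P12 => u j) (fun j hj => hu j.1 hj) ?_
      convert hres using 2
      rename_i j
      by_cases h : (j : Fin m) = i
      · have hj' : j = (⟨i, hi⟩ : ↥P12) := Subtype.ext h
        simp [hj', h, Pi.single_apply]
      · have hj' : j ≠ (⟨i, hi⟩ : ↥P12) := fun hc => h (congrArg Subtype.val hc)
        simp [hj', h, Pi.single_apply]

lemma sum_mem_twoLens {m a b : ℕ} (P1 P2 : Set (Fin m)) (K : Fin m → Set (Fin m))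
    (A : Set (Fin m)) (G' : Matrix (Fin a ⊕ Fin b) (Fin m) F)
    (hz2 : ∀ r : Fin a, ∀ j ∈ P2, G' (inl r) j = 0)
    (hz1 : ∀ r : Fin b, ∀ j ∈ P1, G' (inr r) j = 0)
    (hv : ValidCode F K G') (hs : WeaklySecure F G' A) :
    a + b ∈ twoLens F P1 P2 K A := by
  set e := finSumFinEquiv (m := a) (n := b) with he
  refine ⟨Matrix.of fun r j => G' (e.symm r) j, ?_, ?_, ?_⟩
  · refine ⟨{r | (e.symm r).isLeft}, ?_, ?_⟩
    · intro r hr j hj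
      obtain ⟨q, hq⟩ := Sum.isLeft_iff.1 hr
      show G' (e.symm r) j = 0
      rw [hq]; exact hz2 q j hj
    · intro r hr j hj
      rcases hq : e.symm r with q | q
      · exact absurd (by rw [Set.mem_setOf_eq, hq]; rfl) hr
      · show G' (e.symm r) j = 0
        rw [hq]; exact hz1 q j hj
  · intro i
    obtain ⟨D, hD⟩ := hv i
    refine ⟨fun c s => D (fun q => c (e q)) s, ?_⟩
    intro x
    have harg : (fun q => (Matrix.of fun r j => G' (e.symm r) j).mulVec x (e q))
        = G'.mulVec x := by
      funext q
      show dotProduct ((Matrix.of fun r j => G' (e.symm r) j) (e q)) x = _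
      unfold dotProduct Matrix.mulVec
      refine Finset.sum_congr rfl fun j _ => ?_
      have : (Matrix.of fun r j => G' (e.symm r) j) (e q) j = G' q j := by
        show G' (e.symm (e q)) j = G' q j
        rw [Equiv.symm_apply_apply]
      exact congrArg (fun t => t * x j) this
    beta_reduce
    rw [harg]
    exact hD x
  · have hrs : rowSpace F (Matrix.of fun r j => G' (e.symm r) j) = rowSpace F G' := by
      unfold rowSpace
      congr 1
      exact e.symm.surjective.range_comp (fun q j => G' q j)
    intro i hi u hu hmem
    rw [hrs] at hmem
    exact hs i hi u hu hmem

/-- Case II-C, Corollary 2 of the paper.  Suppose the interactions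
between `P1` and `P12` are fully participated in both directions and valid weakly secure
codes `G1, G2, G12` exist for the three sub-instances.  Then the code in which sender 1
transmits the symbolwise sum of `G1 x⁽¹⁾` and `G12 x⁽¹²⁾` (zero-padded to length
`max {l1, l12}`) and sender 2 transmits `G2 x⁽²⁾` is a valid weakly secure two-sender
linear index code of total length `max {l12, l1} + l2`; in particular
`l* ≤ max {l*₁₂, l*₁} + l*₂`. -/
theorem caseIIC_code {m l1 l2 l12 : ℕ}
    (P1 P2 P12 : Set (Fin m))
    (h12 : Disjoint P1 P2) (h112 : Disjoint P1 P12) (h212 : Disjoint P2 P12)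
    (hcov : P1 ∪ P2 ∪ P12 = Set.univ)
    (K : Fin m → Set (Fin m)) (hK : ∀ i, i ∉ K i)
    (hfull1 : ∀ i ∈ P1, P12 ⊆ K i)
    (hfull2 : ∀ j ∈ P12, P1 ⊆ K j)
    (A : Set (Fin m)) (hA : A ⊂ Set.univ)
    (G1 : Matrix (Fin l1) ↥P1 F) (G2 : Matrix (Fin l2) ↥P2 F)
    (G12 : Matrix (Fin l12) ↥P12 F)
    (hG1v : ValidCode F (subK K P1) G1)
    (hG1s : WeaklySecure F G1 (Subtype.val ⁻¹' A))
    (hG2v : ValidCode F (subK K P2) G2)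
    (hG2s : WeaklySecure F G2 (Subtype.val ⁻¹' A))
    (hG12v : ValidCode F (subK K P12) G12)
    (hG12s : WeaklySecure F G12 (Subtype.val ⁻¹' A)) :
    let G : Matrix (Fin (max l1 l12) ⊕ Fin l2) (Fin m) F :=
      Matrix.of (Sum.elim
        (fun r => (padMat F (max l1 l12) (extendCols F P1 G1) +
          padMat F (max l1 l12) (extendCols F P12 G12)) r)
        (fun r => extendCols F P2 G2 r))
    (∀ r : Fin (max l1 l12), ∀ j ∈ P2, G (Sum.inl r) j = 0) ∧
    (∀ r : Fin l2, ∀ j ∈ P1, G (Sum.inr r) j = 0) ∧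
    ValidCode F K G ∧ WeaklySecure F G A ∧
    sInf (twoLens F P1 P2 K A) ≤
      max (sInf (oneLens F (subK K P12) (Subtype.val ⁻¹' A)))
          (sInf (oneLens F (subK K P1) (Subtype.val ⁻¹' A))) +
        sInf (oneLens F (subK K P2) (Subtype.val ⁻¹' A)) := by
  intro G
  obtain ⟨hz2, hz1, hv, hs⟩ := combMat_spec F P1 P2 P12 h12 h112 h212 hcov K hfull1 hfull2 A
    G1 G2 G12 hG1v hG1s hG2v hG2s hG12v hG12s
  refine ⟨hz2, hz1, hv, hs, ?_⟩
  obtain ⟨H1, hH1v, hH1s⟩ :=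
    Nat.sInf_mem (⟨l1, G1, hG1v, hG1s⟩ : (oneLens F (subK K P1) (Subtype.val ⁻¹' A)).Nonempty)
  obtain ⟨H2, hH2v, hH2s⟩ :=
    Nat.sInf_mem (⟨l2, G2, hG2v, hG2s⟩ : (oneLens F (subK K P2) (Subtype.val ⁻¹' A)).Nonempty)
  obtain ⟨H12, hH12v, hH12s⟩ :=
    Nat.sInf_mem (⟨l12, G12, hG12v, hG12s⟩ :
      (oneLens F (subK K P12) (Subtype.val ⁻¹' A)).Nonempty)
  obtain ⟨hz2', hz1', hv', hs'⟩ := combMat_spec F P1 P2 P12 h12 h112 h212 hcov K hfull1 hfull2 A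
    H1 H2 H12 hH1v hH1s hH2v hH2s hH12v hH12s
  have hmem := sum_mem_twoLens F P1 P2 K A (combMat F P1 P2 P12 H1 H2 H12) hz2' hz1' hv' hs'
  rw [max_comm]
  exact Nat.sInf_le hmem
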